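/- Let X be a topological space, E a finite-dimensional real normed vector space, and C ⊆ X × E a set such that every fiber C_x := {y ∈ E | (x, y) ∈ C} is convex and such that the set-valued map x ↦ C_x is lower semicontinuous. Then for every x ∈ X, {y ∈ E | (x, y) ∈ interior C} = interior (C_x), where interior C is taken in X × E and interior (C_x) is taken in E. -/

import Mathlib

open Metric Set

lemma hull_perturb {E : Type*} [NormedAddCommGroup E] [NormedSpace ℝ E] [FiniteDimensional ℝ E]
    {ι : Type*} [Fintype ι] [Nonempty ι] (p z : ι → E) {y : E} {δ ε : ℝ}
    (hε : 0 < ε) (hδ : ball y δ ⊆ convexHull ℝ (Set.range p))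
    (hz : ∀ i, dist (z i) (p i) < ε) :
    ball y (δ - ε) ⊆ convexHull ℝ (Set.range z) := by
  intro u hu
  by_contra hu'
  set L := convexHull ℝ (Set.range z) with hL
  have hLc : IsClosed L := ((Set.finite_range z).isCompact_convexHull ℝ).isClosed
  obtain ⟨f, c, hfa, hfu⟩ := geometric_hahn_banach_closed_point (convex_convexHull ℝ _) hLc hu'
  have hz0 : z (Classical.arbitrary ι) ∈ L :=
    subset_convexHull ℝ _ ⟨Classical.arbitrary ι, rfl⟩
  have hf0 : f ≠ 0 := by
    rintro rfl
    have h1 : (0:ℝ) < c := hfa _ hz0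
    simp at hfu
    linarith
  have hfnorm : 0 < ‖f‖ := norm_pos_iff.mpr hf0
  have hhalf : ∀ q ∈ ball y δ, f q < c + ε * ‖f‖ := by
    intro q hq
    have hsub : convexHull ℝ (Set.range p) ⊆ {w | f w < c + ε * ‖f‖} := by
      apply convexHull_min _ (convex_halfSpace_lt ⟨map_add f, map_smul f⟩ _)
      rintro _ ⟨i, rfl⟩
      have h1 : f (p i) = f (z i) + f (p i - z i) := by
        rw [← map_add]; congr 1; abel
      have h2 : f (z i) < c := hfa _ (subset_convexHull ℝ _ ⟨i, rfl⟩)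
      have h3 : f (p i - z i) ≤ ‖f‖ * ‖p i - z i‖ :=
        le_trans (le_abs_self _) (by rw [← Real.norm_eq_abs]; exact f.le_opNorm _)
      have h4 : ‖p i - z i‖ < ε := by
        rw [← dist_eq_norm, dist_comm]; exact hz i
      have : f (p i) < c + ‖f‖ * ε := by nlinarith
      simpa [Set.mem_setOf_eq, mul_comm] using this.trans_le (by nlinarith)
    exact hsub (hδ hq)
  -- endgame
  set r := dist u y with hr
  have hr0 : 0 ≤ r := dist_nonneg
  have hrlt : r < δ - ε := mem_ball.mp hu
  have hδpos : 0 < δ := by linarith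
  set η : ℝ := (r + ε + δ) / (2 * δ) with hη
  have hη1 : η < 1 := by rw [hη]; rw [div_lt_one (by linarith)]; linarith
  have hηδ : r + ε < η * δ := by
    rw [hη, div_mul_eq_mul_div, lt_div_iff₀ (by linarith : (0:ℝ) < 2 * δ)]
    nlinarith
  have hηpos : 0 < η := by rw [hη]; positivity
  -- pick g with ‖g‖ < 1 and η * ‖f‖ < f g
  obtain ⟨g₀, hg₀n, hg₀⟩ := f.exists_lt_apply_of_lt_opNorm (r := η * ‖f‖)
    (by nlinarith)
  have : ∃ g : E, ‖g‖ < 1 ∧ η * ‖f‖ < f g := by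
    rcases le_or_gt 0 (f g₀) with h | h
    · exact ⟨g₀, hg₀n, by rwa [Real.norm_eq_abs, abs_of_nonneg h] at hg₀⟩
    · refine ⟨-g₀, by simpa using hg₀n, ?_⟩
      rw [map_neg]
      rwa [Real.norm_eq_abs, abs_of_neg h] at hg₀
  obtain ⟨g, hgn, hgf⟩ := this
  set s : ℝ := (δ + (r + ε) / η) / 2 with hs
  have h1 : (r + ε) / η < δ := (div_lt_iff₀ hηpos).mpr (by linarith [hηδ, mul_comm η δ])
  have hspos : 0 < s := by rw [hs]; positivity
  have hslt : s < δ := by rw [hs]; linarith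
  have hsgt : (r + ε) / η < s := by rw [hs]; linarith
  have hq : y + s • g ∈ ball y δ := by
    rw [mem_ball, dist_eq_norm, add_sub_cancel_left, norm_smul, Real.norm_eq_abs,
      abs_of_pos hspos]
    calc s * ‖g‖ ≤ s * 1 := by nlinarith [norm_nonneg g]
    _ < δ := by linarith
  have hq2 : f y + s * f g < c + ε * ‖f‖ := by
    have := hhalf _ hq
    simpa [map_add, map_smul, smul_eq_mul] using this
  have hfu2 : f u ≤ f y + ‖f‖ * r := by
    have : f u = f y + f (u - y) := by rw [← map_add]; congr 1; abel
    rw [this]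
    have : f (u - y) ≤ ‖f‖ * ‖u - y‖ :=
      le_trans (le_abs_self _) (by rw [← Real.norm_eq_abs]; exact f.le_opNorm _)
    rw [hr, dist_eq_norm]
    linarith
  -- s * f g > (r + ε) * ‖f‖
  have hkey : (r + ε) * ‖f‖ < s * f g := by
    have h5 : (r + ε) / η * (η * ‖f‖) ≤ s * (η * ‖f‖) :=
      mul_le_mul_of_nonneg_right hsgt.le (by positivity)
    have h6 : (r + ε) / η * (η * ‖f‖) = (r + ε) * ‖f‖ := by field_simp
    nlinarith
  nlinarith

/-- Around any point of a finite-dimensional space there is a finite family of points,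
all within `ball y δ`, whose convex hull has `y` in its interior. -/
lemma exists_simplex_around {E : Type*} [NormedAddCommGroup E] [NormedSpace ℝ E]
    [FiniteDimensional ℝ E] (y : E) {δ : ℝ} (hδ : 0 < δ) :
    ∃ (ι : Type) (_ : Fintype ι) (_ : Nonempty ι) (p : ι → E),
      (∀ i, p i ∈ ball y δ) ∧ y ∈ interior (convexHull ℝ (Set.range p)) := by
  set n := Module.finrank ℝ E
  obtain ⟨b⟩ : Nonempty (AffineBasis (Fin (n + 1)) ℝ E) :=
    AffineBasis.exists_affineBasis_of_finiteDimensional (by simp; rfl)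
  set c : E := Finset.univ.centroid ℝ b with hc
  have hcy : c ∈ interior (convexHull ℝ (Set.range b)) :=
    b.centroid_mem_interior_convexHull
  set M : ℝ := Finset.univ.sup' Finset.univ_nonempty (fun i => ‖b i - c‖) with hM
  have hM0 : 0 ≤ M := le_trans (norm_nonneg _) (Finset.le_sup' (fun i => ‖b i - c‖) (Finset.mem_univ (0 : Fin (n + 1))))
  set t : ℝ := δ / (2 * (M + 1)) with ht
  have htpos : 0 < t := by positivity
  -- the affine map v ↦ y + t • (v - c)
  set g : E →ᵃ[ℝ] E := AffineMap.mk' (fun v => y + t • (v - c)) (t • LinearMap.id) c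
    (by intro p'; simp [vadd_eq_add]; abel) with hg
  set hom : E ≃ₜ E := (Homeomorph.subRight c).trans
    ((Homeomorph.smulOfNeZero t htpos.ne').trans (Homeomorph.addLeft y)) with hhom
  have hgh : ∀ v, g v = hom v := by intro v; simp [hg, hhom, AffineMap.coe_mk']
  refine ⟨Fin (n + 1), inferInstance, inferInstance, g ∘ b, ?_, ?_⟩
  · intro i
    have hle : ‖b i - c‖ ≤ M := Finset.le_sup' (fun i => ‖b i - c‖) (Finset.mem_univ i)
    simp only [Function.comp_apply, hg, AffineMap.coe_mk', mem_ball, dist_eq_norm,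
      add_sub_cancel_left, norm_smul, Real.norm_eq_abs, abs_of_pos htpos]
    calc t * ‖b i - c‖ ≤ t * M := by nlinarith
    _ < δ := by rw [ht]; rw [div_mul_eq_mul_div, div_lt_iff₀ (by linarith)]; nlinarith
  · have h1 : Set.range (g ∘ b) = g '' Set.range b := by rw [Set.range_comp]
    rw [h1, ← AffineMap.image_convexHull]
    have h2 : ⇑g '' (convexHull ℝ (Set.range b)) = hom '' (convexHull ℝ (Set.range b)) := by
      apply Set.image_congr'; exact hgh
    rw [h2, ← Homeomorph.image_interior]
    refine ⟨c, hcy, ?_⟩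
    rw [← hgh]
    simp [hg, AffineMap.coe_mk']

/-- Lower semicontinuity of a set-valued map. -/
def LowerSemicontinuousSetMap {X E : Type*} [TopologicalSpace X] [TopologicalSpace E]
    (F : X → Set E) : Prop :=
  ∀ x : X, ∀ V : Set E, IsOpen V → (F x ∩ V).Nonempty →
    {w : X | (F w ∩ V).Nonempty} ∈ nhds x

/-- For a convex-valued lower semicontinuous bundle `C ⊆ X × E`, the fiber of the
interior equals the interior of the fiber. -/
theorem fiber_interior_eq_interior_fiber
    {X E : Type*} [TopologicalSpace X] [NormedAddCommGroup E] [NormedSpace ℝ E]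
    [FiniteDimensional ℝ E]
    (C : Set (X × E))
    (hconv : ∀ x : X, Convex ℝ {y : E | (x, y) ∈ C})
    (hlsc : LowerSemicontinuousSetMap (fun x : X => {y : E | (x, y) ∈ C})) :
    ∀ x : X, {y : E | (x, y) ∈ interior C} = interior {y : E | (x, y) ∈ C} := by
  intro x
  apply Set.Subset.antisymm
  · exact interior_maximal (fun y (hy : (x, y) ∈ interior C) => (interior_subset hy : _))
      (IsOpen.preimage (Continuous.prodMk_right x) isOpen_interior)
  · intro y hy
    obtain ⟨δ, hδpos, hδ⟩ := Metric.mem_nhds_iff.mp (mem_interior_iff_mem_nhds.mp hy)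
    obtain ⟨ι, _, _, p, hpball, hpint⟩ := exists_simplex_around y hδpos
    obtain ⟨δ₀, hδ₀pos, hδ₀⟩ := Metric.mem_nhds_iff.mp (mem_interior_iff_mem_nhds.mp hpint)
    set ε : ℝ := δ₀ / 2 with hε
    have hεpos : 0 < ε := by positivity
    -- neighborhoods from lower semicontinuity
    have hU : ∀ i : ι, {w : X | ({y : E | (w, y) ∈ C} ∩ ball (p i) ε).Nonempty} ∈ nhds x := by
      intro i
      exact hlsc x (ball (p i) ε) isOpen_ball ⟨p i, hδ (hpball i), mem_ball_self hεpos⟩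
    have hUmem : (⋂ i : ι, {w : X | ({y : E | (w, y) ∈ C} ∩ ball (p i) ε).Nonempty}) ∈ nhds x :=
      Filter.iInter_mem.mpr hU
    rw [Set.mem_setOf_eq, mem_interior_iff_mem_nhds, nhds_prod_eq]
    refine Filter.mem_of_superset
      (Filter.prod_mem_prod hUmem (Metric.ball_mem_nhds y hεpos)) ?_
    rintro ⟨w, v⟩ ⟨hw, hv⟩
    have hchoice : ∀ i : ι, ∃ zi : E, (w, zi) ∈ C ∧ zi ∈ ball (p i) ε := by
      intro i
      obtain ⟨zi, hzi1, hzi2⟩ := Set.mem_iInter.mp hw i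
      exact ⟨zi, hzi1, hzi2⟩
    choose z hzC hzball using hchoice
    have hhull : ball y (δ₀ - ε) ⊆ convexHull ℝ (Set.range z) :=
      hull_perturb p z hεpos hδ₀ (fun i => hzball i)
    have hsub : convexHull ℝ (Set.range z) ⊆ {y : E | (w, y) ∈ C} :=
      convexHull_min (by rintro _ ⟨i, rfl⟩; exact hzC i) (hconv w)
    have hv' : v ∈ ball y (δ₀ - ε) := by
      rw [hε] at hv ⊢
      have : δ₀ - δ₀ / 2 = δ₀ / 2 := by ring
      rwa [this]
    exact hsub (hhull hv')
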